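/- Let G be a graph with a partition of its vertex set into V_S and V_D such that G[V_S] is bipartite and G[V_D] is co-bipartite. Let S* be a set of vertices with G[S*] bipartite that is a (2c+1)-local optimum for c = 4, meaning: there is no set S' with |S* ∖ S'| ≤ 4, |S' ∖ S*| = |S* ∖ S'| + 1, and G[S'] bipartite. Then |S*| ≥ |V_S|. -/
import Mathlib


open SimpleGraph

/-- `s` is an independent set of `G`. -/
def IndepOn {V : Type*} (G : SimpleGraph V) (s : Set V) : Prop :=
  s.Pairwise fun a b => ¬ G.Adj a b

/-- The induced subgraph `G[s]` is bipartite: `s` partitions into two independent sets. -/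
def BipartiteOn {V : Type*} (G : SimpleGraph V) (s : Set V) : Prop :=
  ∃ X Y : Set V, X ∪ Y = s ∧ Disjoint X Y ∧ IndepOn G X ∧ IndepOn G Y

/-- The induced subgraph `G[s]` is co-bipartite: `s` partitions into two cliques. -/
def CobipartiteOn {V : Type*} (G : SimpleGraph V) (s : Set V) : Prop :=
  ∃ Q₁ Q₂ : Set V, Q₁ ∪ Q₂ = s ∧ Disjoint Q₁ Q₂ ∧ G.IsClique Q₁ ∧ G.IsClique Q₂

lemma bipartiteOn_mono {V : Type*} {G : SimpleGraph V} {s t : Set V}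
    (hts : t ⊆ s) (hs : BipartiteOn G s) : BipartiteOn G t := by
  obtain ⟨X, Y, hXY, hd, hX, hY⟩ := hs
  refine ⟨X ∩ t, Y ∩ t, ?_, ?_, hX.mono (Set.inter_subset_left),
    hY.mono (Set.inter_subset_left)⟩
  · rw [← Set.union_inter_distrib_right, hXY, Set.inter_eq_right.2 hts]
  · exact hd.mono Set.inter_subset_left Set.inter_subset_left

lemma clique_inter_indep_ncard_le_one {V : Type*} [Finite V] {G : SimpleGraph V} {Q X : Set V}
    (hQ : G.IsClique Q) (hX : IndepOn G X) : (Q ∩ X).ncard ≤ 1 := by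
  rw [Set.ncard_le_one_iff_eq]
  rcases Set.eq_empty_or_nonempty (Q ∩ X) with h | ⟨a, ha⟩
  · exact Or.inl h
  · refine Or.inr ⟨a, Set.eq_singleton_iff_unique_mem.2 ⟨ha, fun b hb => ?_⟩⟩
    by_contra hba
    exact hX hb.2 ha.2 hba (hQ hb.1 ha.1 hba)

theorem local_optimum_ge_sparse_side {V : Type*} [Fintype V] (G : SimpleGraph V)
    (VS VD : Set V)
    (hpart : VS ∪ VD = Set.univ) (hdisj : Disjoint VS VD)
    (hS : BipartiteOn G VS) (hD : CobipartiteOn G VD)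
    (Sstar : Set V) (hSstar : BipartiteOn G Sstar)
    (hopt : ¬ ∃ S' : Set V, (Sstar \ S').ncard ≤ 4 ∧
      (S' \ Sstar).ncard = (Sstar \ S').ncard + 1 ∧ BipartiteOn G S') :
    VS.ncard ≤ Sstar.ncard := by
  by_contra hlt
  push_neg at hlt
  apply hopt
  set P : Set V := Sstar ∩ VD with hPdef
  -- |P| ≤ 4
  obtain ⟨X, Y, hXY, hdXY, hX, hY⟩ := hSstar
  obtain ⟨Q₁, Q₂, hQ, hdQ, hQ₁, hQ₂⟩ := hD
  have hPsub : P ⊆ (Q₁ ∩ X) ∪ (Q₁ ∩ Y) ∪ ((Q₂ ∩ X) ∪ (Q₂ ∩ Y)) := by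
    intro v hv
    have hvS : v ∈ X ∪ Y := hXY ▸ hv.1
    have hvD : v ∈ Q₁ ∪ Q₂ := hQ ▸ hv.2
    rcases hvD with h1 | h2
    · rcases hvS with hx | hy
      · exact Or.inl (Or.inl ⟨h1, hx⟩)
      · exact Or.inl (Or.inr ⟨h1, hy⟩)
    · rcases hvS with hx | hy
      · exact Or.inr (Or.inl ⟨h2, hx⟩)
      · exact Or.inr (Or.inr ⟨h2, hy⟩)
  have hP4 : P.ncard ≤ 4 := by
    have := Set.ncard_le_ncard hPsub (Set.toFinite _)
    have h1 := Set.ncard_union_le (Q₁ ∩ X) (Q₁ ∩ Y)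
    have h2 := Set.ncard_union_le (Q₂ ∩ X) (Q₂ ∩ Y)
    have h3 := Set.ncard_union_le ((Q₁ ∩ X) ∪ (Q₁ ∩ Y)) ((Q₂ ∩ X) ∪ (Q₂ ∩ Y))
    have c1 := clique_inter_indep_ncard_le_one hQ₁ hX
    have c2 := clique_inter_indep_ncard_le_one hQ₁ hY
    have c3 := clique_inter_indep_ncard_le_one hQ₂ hX
    have c4 := clique_inter_indep_ncard_le_one hQ₂ hY
    omega
  -- cardinality bookkeeping
  have hSsplit : Sstar.ncard = (Sstar ∩ VS).ncard + P.ncard := by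
    rw [hPdef, ← Set.ncard_union_eq
      (hdisj.mono Set.inter_subset_right Set.inter_subset_right)
      (Set.toFinite _) (Set.toFinite _),
      ← Set.inter_union_distrib_left, hpart, Set.inter_univ]
  have hVSsplit : VS.ncard = (Sstar ∩ VS).ncard + (VS \ Sstar).ncard := by
    rw [← Set.ncard_union_eq
      (Set.disjoint_sdiff_right.mono_left Set.inter_subset_left)
      (Set.toFinite _) (Set.toFinite _), Set.inter_comm, Set.inter_union_diff]
  have hbig : P.ncard + 1 ≤ (VS \ Sstar).ncard := by omega
  obtain ⟨T, hTsub, hTcard⟩ := Set.exists_subset_card_eq hbig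
  have h1 : Sstar \ ((Sstar \ P) ∪ T) = P := by
    ext v
    have hvT : v ∈ T → v ∉ Sstar := fun h => (hTsub h).2
    simp only [Set.mem_diff, Set.mem_union, hPdef, Set.mem_inter_iff]
    tauto
  have h2 : ((Sstar \ P) ∪ T) \ Sstar = T := by
    ext v
    have hvT : v ∈ T → v ∉ Sstar := fun h => (hTsub h).2
    simp only [Set.mem_diff, Set.mem_union, hPdef, Set.mem_inter_iff]
    tauto
  refine ⟨(Sstar \ P) ∪ T, ?_, ?_, ?_⟩
  · rw [h1]; exact hP4
  · rw [h1, h2, hTcard]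
  · apply bipartiteOn_mono _ hS
    intro v hv
    rcases hv with ⟨hvS, hvP⟩ | hT
    · have : v ∈ VS ∪ VD := hpart ▸ Set.mem_univ v
      rcases this with h | h
      · exact h
      · exact absurd ⟨hvS, h⟩ hvP
    · exact (hTsub hT).1
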